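/- For the even cat state |α₊⟩ ∝ |α⟩ + |−α⟩ with α ≥ 0, the generalized robustness of nonclassicality satisfies R_C(α₊) ≤ 2(1 + e^{-2α²})^{-1}. -/

import Mathlib

noncomputable section
open scoped ENNReal ComplexOrder
open Filter

variable {H : Type} [NormedAddCommGroup H] [InnerProductSpace ℂ H] [CompleteSpace H]

local notation "⟪" x ", " y "⟫" => @inner ℂ _ _ x y

/-- Bounded operators on `H`. -/
abbrev Op (H : Type) [NormedAddCommGroup H] [InnerProductSpace ℂ H] : Type := H →L[ℂ] H

/-- The rank-one projector `|ψ⟩⟨ψ|`. -/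
def projv (ψ : H) : Op H := (innerSL ℂ ψ).smulRight ψ

/-- The trace of an operator with respect to a Hilbert basis. -/
def trB {ι : Type} (e : HilbertBasis ι ℂ H) (T : Op H) : ℂ := ∑' n, ⟪e n, T (e n)⟫

/-- A density operator: positive, trace-class (summable diagonal), unit trace. -/
def IsDensity {ι : Type} (e : HilbertBasis ι ℂ H) (ρ : Op H) : Prop :=
  ρ.IsPositive ∧ Summable (fun n => (⟪e n, ρ (e n)⟫).re) ∧ trB e ρ = 1

/-- The trace norm `Tr |T| = Tr √(T†T)`. -/
def traceNorm {ι : Type} (e : HilbertBasis ι ℂ H) (T : Op H) : ℝ :=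
  ∑' n, (⟪e n, (CFC.sqrt (ContinuousLinearMap.adjoint T ∘L T)) (e n)⟫).re

/-- Sequential closure of a set of operators in the trace norm. -/
def tnClosure {ι : Type} (e : HilbertBasis ι ℂ H) (S : Set (Op H)) : Set (Op H) :=
  {T | ∃ u : ℕ → Op H, (∀ k, u k ∈ S) ∧
    Tendsto (fun k => traceNorm e (u k - T)) atTop (nhds 0)}

/-- The generalized robustness `R_F(ρ) = inf {1 + λ | (ρ + λτ)/(1+λ) ∈ F, τ a density operator}`. -/
def Robustness {ι : Type} (e : HilbertBasis ι ℂ H) (F : Set (Op H)) (ρ : Op H) : ℝ≥0∞ :=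
  sInf {r : ℝ≥0∞ | ∃ lam : ℝ, 0 ≤ lam ∧ ∃ τ : Op H, IsDensity e τ ∧
    ((1 + lam)⁻¹ : ℝ) • (ρ + lam • τ) ∈ F ∧ r = ENNReal.ofReal (1 + lam)}

/-- The coherent state `|α⟩ = e^{-|α|²/2} ∑ₘ (αᵐ/√m!) |m⟩` in the Fock basis `e`. -/
def coh (e : HilbertBasis ℕ ℂ H) (α : ℂ) : H :=
  ∑' m : ℕ, (Complex.exp (-((‖α‖ : ℂ) ^ 2 / 2)) * α ^ m / (Real.sqrt (Nat.factorial m) : ℂ)) • e m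

/-- The classical states: the trace-norm closed convex hull of coherent state projectors. -/
def ClassicalStates (e : HilbertBasis ℕ ℂ H) : Set (Op H) :=
  tnClosure e (convexHull ℝ {T : Op H | ∃ α : ℂ, T = projv (coh e α)})

/-- The even cat state `|α₊⟩ = (|α⟩ + |-α⟩)/√(2(1 + e^{-2α²}))`. -/
def catPlus (e : HilbertBasis ℕ ℂ H) (α : ℝ) : H :=
  (((Real.sqrt (2 * (1 + Real.exp (-2 * α ^ 2))))⁻¹ : ℝ) : ℂ) •
    (coh e (α : ℂ) + coh e (-(α : ℂ)))

def gcoef (a : ℝ) (m : ℕ) : ℝ := Real.exp (-(a ^ 2) / 2) * a ^ m / Real.sqrt (Nat.factorial m)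

lemma summable_abs_gcoef (a : ℝ) : Summable (fun m => |gcoef a m|) := by
  apply summable_of_ratio_norm_eventually_le (r := 1/2) (by norm_num)
  filter_upwards [eventually_ge_atTop (⌈(2*a)^2⌉₊)] with n hn
  have hn' : (2*a)^2 ≤ (n:ℝ) + 1 := by
    calc (2*a)^2 ≤ (⌈(2*a)^2⌉₊ : ℝ) := Nat.le_ceil _
    _ ≤ (n:ℝ) := by exact_mod_cast hn
    _ ≤ (n:ℝ) + 1 := by linarith
  have hsq : 2 * |a| ≤ Real.sqrt ((n:ℝ)+1) := by
    rw [show (2:ℝ) * |a| = Real.sqrt ((2*a)^2) by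
      rw [Real.sqrt_sq_eq_abs, abs_mul]; norm_num]
    exact Real.sqrt_le_sqrt hn'
  have hfac : gcoef a (n+1) = gcoef a n * (a / Real.sqrt ((n:ℝ)+1)) := by
    unfold gcoef
    rw [Nat.factorial_succ, pow_succ]
    push_cast
    rw [Real.sqrt_mul (by positivity)]
    field_simp
    ring
  rw [Real.norm_eq_abs, Real.norm_eq_abs, abs_abs, abs_abs, hfac, abs_mul]
  have hpos : (0:ℝ) < Real.sqrt ((n:ℝ)+1) := Real.sqrt_pos.mpr (by positivity)
  have : |a / Real.sqrt ((n:ℝ)+1)| ≤ 1/2 := by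
    rw [abs_div, abs_of_pos hpos, div_le_iff₀ hpos]
    linarith
  calc |gcoef a n| * |a / Real.sqrt ((n:ℝ)+1)| ≤ |gcoef a n| * (1/2) := by
        exact mul_le_mul_of_nonneg_left this (abs_nonneg _)
    _ = 1/2 * |gcoef a n| := by ring

lemma hasSum_coh (e : HilbertBasis ℕ ℂ H) (a : ℝ) :
    HasSum (fun m => ((gcoef a m : ℝ) : ℂ) • e m) (coh e (a : ℂ)) := by
  have hfun : ∀ m : ℕ,
      (Complex.exp (-((‖(a:ℂ)‖ : ℂ) ^ 2 / 2)) * (a:ℂ) ^ m / (Real.sqrt (Nat.factorial m) : ℂ)) • e m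
        = ((gcoef a m : ℝ) : ℂ) • e m := by
    intro m
    congr 1
    have h1 : ((‖(a:ℂ)‖ : ℂ)) ^ 2 = ((a^2 : ℝ) : ℂ) := by
      rw [Complex.norm_real, Real.norm_eq_abs]
      norm_cast
      exact sq_abs a
    rw [h1, gcoef,
      show -((((a^2 : ℝ)):ℂ)/2) = (((-(a^2)/2 : ℝ)):ℂ) by push_cast; ring,
      ← Complex.ofReal_exp]
    push_cast
    ring
  have hsum : Summable (fun m => ((gcoef a m : ℝ) : ℂ) • e m) := by
    apply Summable.of_norm
    have : ∀ m, ‖((gcoef a m : ℝ) : ℂ) • e m‖ = |gcoef a m| := by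
      intro m
      rw [norm_smul, Complex.norm_real, Real.norm_eq_abs, e.orthonormal.1 m, mul_one]
    rw [funext this]
    exact summable_abs_gcoef a
  have := hsum.hasSum
  rwa [show (∑' m, ((gcoef a m : ℝ) : ℂ) • e m) = coh e (a:ℂ) by
    rw [coh, tsum_congr hfun]] at this

lemma inner_e_coh (e : HilbertBasis ℕ ℂ H) (a : ℝ) (n : ℕ) :
    ⟪e n, coh e (a:ℂ)⟫ = ((gcoef a n : ℝ) : ℂ) := by
  classical
  have h := (hasSum_coh e a).mapL (innerSL ℂ (e n))
  have hterm : ∀ m : ℕ, (innerSL ℂ (e n)) (((gcoef a m : ℝ) : ℂ) • e m)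
      = if m = n then ((gcoef a n : ℝ) : ℂ) else 0 := by
    intro m
    rw [innerSL_apply_apply, inner_smul_right]
    rw [orthonormal_iff_ite.mp e.orthonormal]
    by_cases hmn : m = n
    · subst hmn; simp
    · simp [hmn, Ne.symm hmn]
  rw [show (fun m => (innerSL ℂ (e n)) (((gcoef a m : ℝ) : ℂ) • e m))
      = (fun m => if m = n then ((gcoef a n : ℝ) : ℂ) else 0) from funext hterm] at h
  rw [← innerSL_apply_apply (𝕜 := ℂ)]
  exact h.unique (hasSum_ite_eq n _)

lemma inner_coh_coh (e : HilbertBasis ℕ ℂ H) (a b : ℝ) :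
    ⟪coh e (a:ℂ), coh e (b:ℂ)⟫ = ((Real.exp (-((a-b)^2)/2) : ℝ) : ℂ) := by
  have h := (hasSum_coh e b).mapL (innerSL ℂ (coh e (a:ℂ)))
  have hterm : ∀ m : ℕ, (innerSL ℂ (coh e (a:ℂ))) (((gcoef b m : ℝ) : ℂ) • e m)
      = ((gcoef a m * gcoef b m : ℝ) : ℂ) := by
    intro m
    rw [innerSL_apply_apply, inner_smul_right, ← inner_conj_symm, inner_e_coh, Complex.conj_ofReal]
    push_cast
    ring
  rw [show (fun m => (innerSL ℂ (coh e (a:ℂ))) (((gcoef b m : ℝ) : ℂ) • e m))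
      = (fun m => ((gcoef a m * gcoef b m : ℝ) : ℂ)) from funext hterm] at h
  have hre : HasSum (fun m => gcoef a m * gcoef b m) (Real.exp (-((a-b)^2)/2)) := by
    have h0 : HasSum (fun m : ℕ => (a*b)^m / (Nat.factorial m : ℝ)) (Real.exp (a*b)) := by
      rw [Real.exp_eq_exp_ℝ]
      exact NormedSpace.expSeries_div_hasSum_exp (a*b)
    have h1 := h0.mul_left (Real.exp (-(a^2)/2) * Real.exp (-(b^2)/2))
    have heq : ∀ m : ℕ, Real.exp (-(a^2)/2) * Real.exp (-(b^2)/2) * ((a*b)^m / (Nat.factorial m : ℝ))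
        = gcoef a m * gcoef b m := by
      intro m
      unfold gcoef
      have hf : Real.sqrt (Nat.factorial m) * Real.sqrt (Nat.factorial m) = (Nat.factorial m : ℝ) :=
        Real.mul_self_sqrt (by positivity)
      have hf0 : (Real.sqrt (Nat.factorial m)) ≠ 0 := by
        have : (0:ℝ) < Real.sqrt (Nat.factorial m) := Real.sqrt_pos.mpr (by positivity)
        linarith
      field_simp
      rw [mul_pow]
      rw [Real.sq_sqrt (by positivity)]
      ring
    have hval : Real.exp (-(a^2)/2) * Real.exp (-(b^2)/2) * Real.exp (a*b)
        = Real.exp (-((a-b)^2)/2) := by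
      rw [← Real.exp_add, ← Real.exp_add]
      congr 1
      ring
    rw [funext heq, hval] at h1
    exact h1
  have := (Complex.hasSum_ofReal.mpr hre)
  exact h.unique this

lemma projv_apply (ψ x : H) : projv ψ x = ⟪ψ, x⟫ • ψ := rfl

lemma real_smul_mod {M : Type} [AddCommGroup M] [Module ℂ M] [Module ℝ M]
    [IsScalarTower ℝ ℂ M] (r : ℝ) (m : M) : r • m = ((r : ℂ)) • m := by
  rw [← smul_one_smul ℂ r m, Complex.real_smul, mul_one]

lemma projv_real_smul (c : ℝ) (ψ : H) :
    projv (((c : ℝ) : ℂ) • ψ) = (c^2 : ℝ) • projv ψ := by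
  ext x
  rw [real_smul_mod]
  simp only [projv_apply, ContinuousLinearMap.smul_apply, projv_apply,
    inner_smul_left, Complex.conj_ofReal, smul_smul]
  push_cast
  ring_nf

lemma projv_add (ψ φ : H) : projv (ψ + φ) = projv ψ + projv φ
    + ((innerSL ℂ ψ).smulRight φ + (innerSL ℂ φ).smulRight ψ) := by
  ext x
  simp only [projv_apply, ContinuousLinearMap.add_apply, ContinuousLinearMap.smulRight_apply,
    innerSL_apply_apply, inner_add_left, add_smul, smul_add]
  abel

lemma projv_sub (ψ φ : H) : projv (ψ - φ) = projv ψ + projv φ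
    - ((innerSL ℂ ψ).smulRight φ + (innerSL ℂ φ).smulRight ψ) := by
  ext x
  simp only [projv_apply, ContinuousLinearMap.sub_apply, ContinuousLinearMap.add_apply,
    ContinuousLinearMap.smulRight_apply, innerSL_apply_apply, inner_sub_left, sub_smul, smul_sub]
  abel

lemma isSelfAdjoint_projv (ψ : H) : IsSelfAdjoint (projv ψ) := by
  rw [ContinuousLinearMap.isSelfAdjoint_iff_isSymmetric]
  intro x y
  show ⟪projv ψ x, y⟫ = ⟪x, projv ψ y⟫
  rw [projv_apply, projv_apply, inner_smul_left, inner_smul_right, ← inner_conj_symm x ψ]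
  ring

lemma isPositive_smul_projv (c : ℝ) (hc : 0 ≤ c) (ψ : H) : (c • projv ψ).IsPositive := by
  constructor
  · exact ContinuousLinearMap.isSelfAdjoint_iff_isSymmetric.mp
      (IsSelfAdjoint.smul (isSelfAdjoint_iff.mpr (star_trivial c)) (isSelfAdjoint_projv ψ))
  · intro x
    rw [ContinuousLinearMap.reApplyInnerSelf_apply]
    have : ((c • projv ψ) x) = (c : ℂ) • (⟪ψ, x⟫ • ψ) := by
      rw [ContinuousLinearMap.smul_apply, projv_apply, real_smul_mod]
    rw [this, smul_smul, inner_smul_left]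
    have h2 : (starRingEnd ℂ) ((c:ℂ) * ⟪ψ, x⟫) * ⟪ψ, x⟫
        = ((c * Complex.normSq ⟪ψ, x⟫ : ℝ) : ℂ) := by
      rw [map_mul, Complex.conj_ofReal]
      rw [mul_assoc, mul_comm ((starRingEnd ℂ) ⟪ψ, x⟫), Complex.mul_conj]
      push_cast
      ring
    rw [h2]
    have h3 : RCLike.re (((c * Complex.normSq ⟪ψ, x⟫ : ℝ)) : ℂ) = c * Complex.normSq ⟪ψ, x⟫ :=
      Complex.ofReal_re _
    rw [h3]
    exact mul_nonneg hc (Complex.normSq_nonneg _)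

lemma hasSum_diag_smul_projv {ι : Type} (e : HilbertBasis ι ℂ H) (c : ℝ) (ψ : H) :
    HasSum (fun n => ⟪e n, (c • projv ψ) (e n)⟫) ((c : ℂ) * ⟪ψ, ψ⟫) := by
  have hdiag : ∀ n, ⟪e n, (c • projv ψ) (e n)⟫ = (c:ℂ) * (⟪ψ, e n⟫ * ⟪e n, ψ⟫) := by
    intro n
    rw [ContinuousLinearMap.smul_apply, projv_apply, real_smul_mod, inner_smul_right,
      inner_smul_right]
  rw [funext hdiag]
  exact (e.hasSum_inner_mul_inner ψ ψ).mul_left _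

lemma isDensity_smul_projv {ι : Type} (e : HilbertBasis ι ℂ H) (c : ℝ) (hc : 0 ≤ c) (ψ : H)
    (h1 : (c : ℂ) * ⟪ψ, ψ⟫ = 1) : IsDensity e (c • projv ψ) := by
  have hS := hasSum_diag_smul_projv e c ψ
  rw [h1] at hS
  refine ⟨isPositive_smul_projv c hc ψ, ?_, ?_⟩
  · exact (Complex.hasSum_re hS).summable
  · rw [trB, hS.tsum_eq]

set_option synthInstance.maxHeartbeats 1000000 in
lemma traceNorm_zero {ι : Type} (e : HilbertBasis ι ℂ H) : traceNorm e (0 : Op H) = 0 := by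
  rw [traceNorm]
  have h0 : CFC.sqrt ((ContinuousLinearMap.adjoint (0 : Op H)).comp (0 : Op H)) = 0 := by
    rw [ContinuousLinearMap.comp_zero]
    exact CFC.sqrt_zero
  simp only [h0]
  simp

lemma subset_tnClosure {ι : Type} (e : HilbertBasis ι ℂ H) (S : Set (Op H)) :
    S ⊆ tnClosure e S := by
  intro T hT
  refine ⟨fun _ => T, fun _ => hT, ?_⟩
  have : (fun k : ℕ => traceNorm e (T - T)) = fun _ => 0 := by
    funext k; rw [sub_self, traceNorm_zero]
  rw [this]
  exact tendsto_const_nhds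

-- mixture of two coherent projectors is classical
lemma half_mix_mem_classical (e : HilbertBasis ℕ ℂ H) (β γ : ℂ) :
    (1/2 : ℝ) • projv (coh e β) + (1/2 : ℝ) • projv (coh e γ) ∈ ClassicalStates e := by
  apply subset_tnClosure
  have hA : projv (coh e β) ∈ convexHull ℝ {T : Op H | ∃ δ : ℂ, T = projv (coh e δ)} :=
    subset_convexHull ℝ _ ⟨β, rfl⟩
  have hB : projv (coh e γ) ∈ convexHull ℝ {T : Op H | ∃ δ : ℂ, T = projv (coh e δ)} :=
    subset_convexHull ℝ _ ⟨γ, rfl⟩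
  exact (convex_convexHull ℝ _) hA hB (by norm_num) (by norm_num) (by norm_num)

/-- `R_C(α₊) ≤ 2(1 + e^{-2α²})⁻¹` for the even cat state with `α ≥ 0`. -/
theorem robustness_nonclassicality_cat_upper (e : HilbertBasis ℕ ℂ H) (α : ℝ) (hα : 0 ≤ α) :
    Robustness e (ClassicalStates e) (projv (catPlus e α)) ≤
      ENNReal.ofReal (2 * (1 + Real.exp (-2 * α ^ 2))⁻¹) := by
  rcases eq_or_lt_of_le hα with h0 | hpos
  · -- α = 0
    subst h0
    have hcat : catPlus e 0 = coh e (((0:ℝ)) : ℂ) := by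
      rw [catPlus]
      have h4 : Real.sqrt (2 * (1 + Real.exp (-2 * (0:ℝ) ^ 2))) = 2 := by
        rw [show (2 * (1 + Real.exp (-2 * (0:ℝ) ^ 2))) = 2 ^ 2 by
          norm_num [Real.exp_zero]]
        exact Real.sqrt_sq (by norm_num)
      rw [h4]
      rw [show (-((0:ℝ):ℂ)) = (((0:ℝ)):ℂ) by norm_num]
      rw [← two_smul ℂ (coh e (((0:ℝ)):ℂ)), smul_smul]
      norm_num
    apply sInf_le
    refine ⟨0, le_refl 0, (1:ℝ) • projv (coh e (((0:ℝ)):ℂ)), ?_, ?_, ?_⟩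
    · apply isDensity_smul_projv e 1 (by norm_num)
      rw [inner_coh_coh]
      norm_num
    · have hsimp : ((1 + (0:ℝ))⁻¹ : ℝ) • (projv (catPlus e 0)
          + (0:ℝ) • ((1:ℝ) • projv (coh e (((0:ℝ)):ℂ))))
          = projv (catPlus e 0) := by
        rw [zero_smul, add_zero]
        norm_num
      rw [hsimp, hcat]
      have hsplit : projv (coh e (((0:ℝ)):ℂ)) = (1/2:ℝ) • projv (coh e (((0:ℝ)):ℂ))
          + (1/2:ℝ) • projv (coh e (((0:ℝ)):ℂ)) := by
        rw [← add_smul]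
        norm_num
      rw [hsplit]
      exact half_mix_mem_classical e _ _
    · congr 1
      norm_num [Real.exp_zero]
  · -- 0 < α
    set s : ℝ := Real.exp (-2 * α ^ 2) with hsdef
    have hs0 : 0 < s := Real.exp_pos _
    have hs1 : s < 1 := by
      rw [hsdef, Real.exp_lt_one_iff]
      nlinarith
    clear_value s
    have h1s : (0:ℝ) < 1 + s := by linarith
    have h1s' : (0:ℝ) < 1 - s := by linarith
    set u : H := coh e (α : ℂ) with hu
    set v : H := coh e (-(α : ℂ)) with hv
    have hvcast : v = coh e (((-α : ℝ) : ℂ)) := by rw [hv]; norm_cast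
    have huu : ⟪u, u⟫ = 1 := by
      rw [hu, inner_coh_coh]; simp
    have hvv : ⟪v, v⟫ = 1 := by
      rw [hvcast, inner_coh_coh]; simp
    have huv : ⟪u, v⟫ = ((s : ℝ) : ℂ) := by
      rw [hu, hvcast, inner_coh_coh, hsdef]
      norm_num
      congr 1
      ring
    have hvu : ⟪v, u⟫ = ((s : ℝ) : ℂ) := by
      rw [hvcast, hu, inner_coh_coh, hsdef]
      norm_num
      congr 1
      ring
    -- the witness
    set lam : ℝ := (1 - s) / (1 + s) with hlam
    have hlam0 : 0 ≤ lam := by rw [hlam]; positivity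
    clear_value lam
    set τ : Op H := ((2 * (1 - s))⁻¹ : ℝ) • projv (u - v) with hτ
    have hinner_uv : ⟪u - v, u - v⟫ = ((2 * (1 - s) : ℝ) : ℂ) := by
      rw [inner_sub_left, inner_sub_right, inner_sub_right, huu, hvv, huv, hvu]
      push_cast
      ring
    have hτdens : IsDensity e τ := by
      apply isDensity_smul_projv e _ (by positivity) _
      rw [hinner_uv, ← Complex.ofReal_mul]
      norm_cast
      field_simp
    apply sInf_le
    refine ⟨lam, hlam0, τ, hτdens, ?_, ?_⟩
    · -- membership
      set A : Op H := projv u with hA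
      set B : Op H := projv v with hB
      set X : Op H := (innerSL ℂ u).smulRight v + (innerSL ℂ v).smulRight u with hX
      have hρ : projv (catPlus e α) = ((2 * (1 + s))⁻¹ : ℝ) • (A + B + X) := by
        rw [catPlus, ← hu, ← hv, ← hsdef, projv_real_smul, projv_add, ← hA, ← hB, ← hX]
        congr 1
        rw [inv_pow, Real.sq_sqrt (by positivity)]
      have hτ' : τ = ((2 * (1 - s))⁻¹ : ℝ) • (A + B - X) := by
        rw [hτ, projv_sub, ← hA, ← hB, ← hX]
      have key : ((1 + lam)⁻¹ : ℝ) • (projv (catPlus e α) + lam • τ)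
          = (1/2 : ℝ) • A + (1/2 : ℝ) • B := by
        have hne1 : (1:ℝ) + s ≠ 0 := ne_of_gt h1s
        have hne2 : (1:ℝ) - s ≠ 0 := ne_of_gt h1s'
        rw [hρ, hτ', hlam]
        match_scalars <;> (field_simp; ring)
      rw [key, hA, hB, hu, hv]
      exact half_mix_mem_classical e _ _
    · -- value
      congr 1
      rw [hlam]
      field_simp
      norm_num
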